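/- Let ABC be a triangle and let ω be the circle obtained by reflecting the circumcircle of ABC across line AB. If equal cevians AA₁ and BB₁ of triangle ABC intersect at a point lying on ω, then AC = BC. -/

import Mathlib

open EuclideanGeometry Real

noncomputable section

/-- The Euclidean plane. -/
abbrev Pt : Type := EuclideanSpace ℝ (Fin 2)

private lemma pt_ext {x y : Pt} (h0 : x 0 = y 0) (h1 : x 1 = y 1) : x = y := by
  refine PiLp.ext fun i => ?_
  fin_cases i
  · exact h0
  · exact h1

private lemma dist_sq_coord (x y : Pt) :
    (x 0 - y 0) ^ 2 + (x 1 - y 1) ^ 2 = dist x y ^ 2 := by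
  have h : dist x y ^ 2 = ∑ i, dist (x i) (y i) ^ 2 := by
    rw [EuclideanSpace.dist_eq, Real.sq_sqrt (by positivity)]
  rw [h, Fin.sum_univ_two, Real.dist_eq, Real.dist_eq, sq_abs, sq_abs]

/-- Scalar core of the argument. -/
private lemma key (β γ δ u v s t K L : ℝ) (hs : s ≠ 0) (hu : u ≠ 0) (hγ : γ ≠ 0)
    (hC1 : t * (1 - u) = 1 - s) (hC2 : t * u = s * v)
    (hK : K = (1 - u) ^ 2 * β + 2 * u * (1 - u) * δ + u ^ 2 * γ)
    (hL : L = β - 2 * v * δ + v ^ 2 * γ)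
    (hE : t * K = (1 - u) * β + 2 * u * δ - u * γ)
    (hKL : K = L) : β = 2 * δ := by
  have P1 : 2 * u * s * δ + s * (1 - u) * β = u * γ * (1 + t * u) := by
    linear_combination -hE + t * hK + (2 * u * δ + (1 - u) * β) * hC1
  have P2 : s * K = u * γ := by
    linear_combination s * hK + (1 - u) * P1 + u ^ 2 * γ * hC1
  have P3 : s ^ 2 * L = s * β - t * u * γ := by
    linear_combination s ^ 2 * hL + s * β * hC1 - t * P1 +
      (2 * s * δ - 2 * γ * t * u + γ * (t * u - s * v)) * hC2
  have P4 : s * β = u * γ * (s + t) := by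
    linear_combination s * P2 - P3 - s ^ 2 * hKL
  have hfin : s * (u * (β - 2 * δ)) = 0 := by
    linear_combination u * γ * hC1 + P4 - P1
  rcases mul_eq_zero.mp hfin with h | h
  · exact absurd h hs
  rcases mul_eq_zero.mp h with h | h
  · exact absurd h hu
  · linarith

/-- Coordinate core of the argument. -/
private lemma aux (b₁ b₂ c₁ c₂ q₁ q₂ p₁ p₂ α₁ α₂ w₁ w₂ o₁ o₂ σ u v s t r : ℝ)
    (hχ : b₁ * c₂ - b₂ * c₁ ≠ 0)
    (F1 : q₁ ^ 2 + q₂ ^ 2 = r ^ 2)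
    (F2 : (q₁ - b₁) ^ 2 + (q₂ - b₂) ^ 2 = r ^ 2)
    (F3 : (q₁ - c₁) ^ 2 + (q₂ - c₂) ^ 2 = r ^ 2)
    (F4a : (q₁ + p₁) / 2 = σ * b₁) (F4b : (q₂ + p₂) / 2 = σ * b₂)
    (F5 : (p₁ - q₁) * b₁ + (p₂ - q₂) * b₂ = 0)
    (F6a : α₁ = b₁ + u * (c₁ - b₁)) (F6b : α₂ = b₂ + u * (c₂ - b₂))
    (F7a : w₁ = v * c₁) (F7b : w₂ = v * c₂)
    (F8a : o₁ = t * α₁) (F8b : o₂ = t * α₂)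
    (F9a : o₁ = b₁ + s * (w₁ - b₁)) (F9b : o₂ = b₂ + s * (w₂ - b₂))
    (F10 : α₁ ^ 2 + α₂ ^ 2 = (w₁ - b₁) ^ 2 + (w₂ - b₂) ^ 2)
    (F11 : (o₁ - p₁) ^ 2 + (o₂ - p₂) ^ 2 = r ^ 2)
    (hne1 : ¬(α₁ = b₁ ∧ α₂ = b₂)) (hne2 : ¬(w₁ = 0 ∧ w₂ = 0)) :
    c₁ ^ 2 + c₂ ^ 2 = (c₁ - b₁) ^ 2 + (c₂ - b₂) ^ 2 := by
  subst F8a F8b F6a F6b F7a F7b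
  have keyxy : ∀ x y : ℝ, x * b₁ + y * c₁ = 0 → x * b₂ + y * c₂ = 0 → x = 0 ∧ y = 0 := by
    intro x y h1 h2
    constructor
    · have hx : x * (b₁ * c₂ - b₂ * c₁) = 0 := by linear_combination c₂ * h1 - c₁ * h2
      exact (mul_eq_zero.mp hx).resolve_right hχ
    · have hy : y * (b₁ * c₂ - b₂ * c₁) = 0 := by linear_combination b₁ * h2 - b₂ * h1
      exact (mul_eq_zero.mp hy).resolve_right hχ
  have hβ : b₁ ^ 2 + b₂ ^ 2 ≠ 0 := by
    intro h
    have h1 : b₁ = 0 := by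
      have := (add_eq_zero_iff_of_nonneg (sq_nonneg b₁) (sq_nonneg b₂)).mp h
      exact pow_eq_zero_iff (n := 2) (by norm_num) |>.mp this.1
    have h2 : b₂ = 0 := by
      have := (add_eq_zero_iff_of_nonneg (sq_nonneg b₁) (sq_nonneg b₂)).mp h
      exact pow_eq_zero_iff (n := 2) (by norm_num) |>.mp this.2
    exact hχ (by rw [h1, h2]; ring)
  have hγ : c₁ ^ 2 + c₂ ^ 2 ≠ 0 := by
    intro h
    have h1 : c₁ = 0 := by
      have := (add_eq_zero_iff_of_nonneg (sq_nonneg c₁) (sq_nonneg c₂)).mp h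
      exact pow_eq_zero_iff (n := 2) (by norm_num) |>.mp this.1
    have h2 : c₂ = 0 := by
      have := (add_eq_zero_iff_of_nonneg (sq_nonneg c₁) (sq_nonneg c₂)).mp h
      exact pow_eq_zero_iff (n := 2) (by norm_num) |>.mp this.2
    exact hχ (by rw [h1, h2]; ring)
  have hu0 : u ≠ 0 := by
    intro h
    exact hne1 ⟨by rw [h]; ring, by rw [h]; ring⟩
  have hv0 : v ≠ 0 := by
    intro h
    exact hne2 ⟨by rw [h]; ring, by rw [h]; ring⟩
  have D1 : 2 * (q₁ * b₁ + q₂ * b₂) = b₁ ^ 2 + b₂ ^ 2 := by linear_combination F1 - F2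
  have D2 : 2 * (q₁ * c₁ + q₂ * c₂) = c₁ ^ 2 + c₂ ^ 2 := by linear_combination F1 - F3
  have hσβ : (b₁ ^ 2 + b₂ ^ 2) * (2 * σ) = (b₁ ^ 2 + b₂ ^ 2) * 1 := by
    linear_combination (-2 * b₁) * F4a + (-2 * b₂) * F4b + F5 + D1
  have hσ : σ = 1 / 2 := by
    have := mul_left_cancel₀ hβ hσβ
    linarith
  subst hσ
  have D3a : p₁ = b₁ - q₁ := by linear_combination 2 * F4a
  have D3b : p₂ = b₂ - q₂ := by linear_combination 2 * F4b
  subst D3a D3b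
  have ht0 : t ≠ 0 := by
    intro h
    subst h
    obtain ⟨h1, h2⟩ := keyxy (1 - s) (s * v) (by linear_combination -F9a)
      (by linear_combination -F9b)
    have hs1 : s = 1 := by linarith
    rw [hs1] at h2
    simp at h2
    exact hv0 h2
  have hs0 : s ≠ 0 := by
    intro h
    subst h
    obtain ⟨h1, h2⟩ := keyxy (t * (1 - u) - 1) (t * u) (by linear_combination F9a)
      (by linear_combination F9b)
    rcases mul_eq_zero.mp h2 with h3 | h3
    · rw [h3] at h1; norm_num at h1
    · exact hu0 h3
  obtain ⟨e1, e2⟩ := keyxy (t * (1 - u) - (1 - s)) (t * u - s * v)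
    (by linear_combination F9a) (by linear_combination F9b)
  have hC1 : t * (1 - u) = 1 - s := by linarith
  have hC2 : t * u = s * v := by linarith
  have Et : t * (t * ((b₁ + u * (c₁ - b₁)) ^ 2 + (b₂ + u * (c₂ - b₂)) ^ 2)) =
      t * ((1 - u) * (b₁ ^ 2 + b₂ ^ 2) + 2 * u * (b₁ * c₁ + b₂ * c₂) - u * (c₁ ^ 2 + c₂ ^ 2)) := by
    linear_combination F11 - F2 - (t * (1 - u)) * D1 - (t * u) * D2
  have E := mul_left_cancel₀ ht0 Et
  have hfinal := key (b₁ ^ 2 + b₂ ^ 2) (c₁ ^ 2 + c₂ ^ 2) (b₁ * c₁ + b₂ * c₂) u v s t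
    ((b₁ + u * (c₁ - b₁)) ^ 2 + (b₂ + u * (c₂ - b₂)) ^ 2)
    ((v * c₁ - b₁) ^ 2 + (v * c₂ - b₂) ^ 2)
    hs0 hu0 hγ hC1 hC2 (by ring) (by ring) E F10
  linear_combination -hfinal

private lemma cross_ne_zero {A B C : Pt} (h : AffineIndependent ℝ ![A, B, C]) :
    (B 0 - A 0) * (C 1 - A 1) - (B 1 - A 1) * (C 0 - A 0) ≠ 0 := by
  intro hχ
  rw [affineIndependent_iff_not_collinear_set] at h
  apply h
  by_cases hb : B = A
  · have hset : ({A, B, C} : Set Pt) = {A, C} := by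
      rw [hb]
      simp [Set.insert_comm]
    rw [hset]
    exact collinear_pair ℝ A C
  · have hβ : (B 0 - A 0) ^ 2 + (B 1 - A 1) ^ 2 ≠ 0 := by
      intro h0
      apply hb
      have h1 : B 0 - A 0 = 0 := by
        have := (add_eq_zero_iff_of_nonneg (sq_nonneg _) (sq_nonneg _)).mp h0
        exact pow_eq_zero_iff (n := 2) (by norm_num) |>.mp this.1
      have h2 : B 1 - A 1 = 0 := by
        have := (add_eq_zero_iff_of_nonneg (sq_nonneg _) (sq_nonneg _)).mp h0
        exact pow_eq_zero_iff (n := 2) (by norm_num) |>.mp this.2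
      exact pt_ext (by linarith) (by linarith)
    set μ : ℝ := ((B 0 - A 0) * (C 0 - A 0) + (B 1 - A 1) * (C 1 - A 1)) /
      ((B 0 - A 0) ^ 2 + (B 1 - A 1) ^ 2) with hμ
    have hC : C = μ • (B -ᵥ A) +ᵥ A := by
      apply pt_ext
      · show C 0 = μ * (B 0 - A 0) + A 0
        rw [hμ]
        field_simp
        linear_combination (-(B 1 - A 1)) * hχ
      · show C 1 = μ * (B 1 - A 1) + A 1
        rw [hμ]
        field_simp
        linear_combination (B 0 - A 0) * hχ
    have hmem : C ∈ line[ℝ, A, B] := by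
      rw [hC]
      exact smul_vsub_vadd_mem_affineSpan_pair μ A B
    have hcol := collinear_insert_of_mem_affineSpan_pair hmem
    refine hcol.subset ?_
    intro x hx
    simp only [Set.mem_insert_iff, Set.mem_singleton_iff] at hx ⊢
    tauto

/-- If equal cevians `AA₁` and `BB₁` of triangle `ABC` intersect at a point lying on
the circle obtained by reflecting the circumcircle of `ABC` across line `AB`
(its centre `Q'` is the reflection of the circumcentre `Q` across line `AB`),
then `AC = BC`. -/
theorem isosceles_of_cevians_meet_on_reflected_circumcircle
    (A B C A₁ B₁ O Q Q' : Pt) (r : ℝ)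
    (hABC : AffineIndependent ℝ ![A, B, C])
    (hQA : dist Q A = r) (hQB : dist Q B = r) (hQC : dist Q C = r)
    (hmid : midpoint ℝ Q Q' ∈ affineSpan ℝ ({A, B} : Set Pt))
    (hperp : (inner ℝ (Q' -ᵥ Q) (B -ᵥ A) : ℝ) = 0)
    (hA₁ : A₁ ∈ affineSpan ℝ ({B, C} : Set Pt)) (hA₁B : A₁ ≠ B) (hA₁C : A₁ ≠ C)
    (hB₁ : B₁ ∈ affineSpan ℝ ({A, C} : Set Pt)) (hB₁A : B₁ ≠ A) (hB₁C : B₁ ≠ C)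
    (hlen : dist A A₁ = dist B B₁)
    (hO₁ : O ∈ segment ℝ A A₁) (hO₂ : O ∈ segment ℝ B B₁)
    (hω : dist Q' O = r) :
    dist A C = dist B C := by
  -- coordinate facts for the circle hypotheses
  have F1 : (Q 0 - A 0) ^ 2 + (Q 1 - A 1) ^ 2 = r ^ 2 := by
    rw [dist_sq_coord, hQA]
  have F2 : (Q 0 - B 0) ^ 2 + (Q 1 - B 1) ^ 2 = r ^ 2 := by
    rw [dist_sq_coord, hQB]
  have F3 : (Q 0 - C 0) ^ 2 + (Q 1 - C 1) ^ 2 = r ^ 2 := by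
    rw [dist_sq_coord, hQC]
  have F11 : (O 0 - Q' 0) ^ 2 + (O 1 - Q' 1) ^ 2 = r ^ 2 := by
    rw [dist_sq_coord, dist_comm, hω]
  -- the midpoint condition
  have hm : (midpoint ℝ Q Q' -ᵥ A) +ᵥ A ∈ line[ℝ, A, B] := by rwa [vsub_vadd]
  obtain ⟨σ, hσ⟩ := vadd_left_mem_affineSpan_pair.mp hm
  have F4a : ((Q 0 - A 0) + (Q' 0 - A 0)) / 2 = σ * (B 0 - A 0) := by
    have h := congrArg (fun p : Pt => p 0) hσ
    simp only [PiLp.smul_apply, smul_eq_mul, vsub_eq_sub, PiLp.sub_apply, PiLp.add_apply,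
      pi_midpoint_apply, midpoint_eq_smul_add, invOf_eq_inv, smul_eq_mul] at h
    linear_combination -h
  have F4b : ((Q 1 - A 1) + (Q' 1 - A 1)) / 2 = σ * (B 1 - A 1) := by
    have h := congrArg (fun p : Pt => p 1) hσ
    simp only [PiLp.smul_apply, smul_eq_mul, vsub_eq_sub, PiLp.sub_apply, PiLp.add_apply,
      pi_midpoint_apply, midpoint_eq_smul_add, invOf_eq_inv, smul_eq_mul] at h
    linear_combination -h
  -- the perpendicularity condition
  have F5 : ((Q' 0 - A 0) - (Q 0 - A 0)) * (B 0 - A 0)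
      + ((Q' 1 - A 1) - (Q 1 - A 1)) * (B 1 - A 1) = 0 := by
    simp only [PiLp.inner_apply, RCLike.inner_apply, conj_trivial, Fin.sum_univ_two,
      vsub_eq_sub, PiLp.sub_apply] at hperp
    linear_combination hperp
  -- the cevian points
  have hA₁' : (A₁ -ᵥ B) +ᵥ B ∈ line[ℝ, B, C] := by rwa [vsub_vadd]
  obtain ⟨u, hu⟩ := vadd_left_mem_affineSpan_pair.mp hA₁'
  have hB₁' : (B₁ -ᵥ A) +ᵥ A ∈ line[ℝ, A, C] := by rwa [vsub_vadd]
  obtain ⟨v, hv⟩ := vadd_left_mem_affineSpan_pair.mp hB₁'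
  have F6a : A₁ 0 - A 0 = (B 0 - A 0) + u * ((C 0 - A 0) - (B 0 - A 0)) := by
    have h := congrArg (fun p : Pt => p 0) hu
    simp only [PiLp.smul_apply, smul_eq_mul, vsub_eq_sub, PiLp.sub_apply] at h
    linear_combination -h
  have F6b : A₁ 1 - A 1 = (B 1 - A 1) + u * ((C 1 - A 1) - (B 1 - A 1)) := by
    have h := congrArg (fun p : Pt => p 1) hu
    simp only [PiLp.smul_apply, smul_eq_mul, vsub_eq_sub, PiLp.sub_apply] at h
    linear_combination -h
  have F7a : B₁ 0 - A 0 = v * (C 0 - A 0) := by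
    have h := congrArg (fun p : Pt => p 0) hv
    simp only [PiLp.smul_apply, smul_eq_mul, vsub_eq_sub, PiLp.sub_apply] at h
    linear_combination -h
  have F7b : B₁ 1 - A 1 = v * (C 1 - A 1) := by
    have h := congrArg (fun p : Pt => p 1) hv
    simp only [PiLp.smul_apply, smul_eq_mul, vsub_eq_sub, PiLp.sub_apply] at h
    linear_combination -h
  -- the intersection point on the two segments
  rw [segment_eq_image'] at hO₁ hO₂
  obtain ⟨t, -, hO₁'⟩ := hO₁
  obtain ⟨s, -, hO₂'⟩ := hO₂
  have F8a : O 0 - A 0 = t * (A₁ 0 - A 0) := by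
    have h := congrArg (fun p : Pt => p 0) hO₁'
    simp only [PiLp.add_apply, PiLp.smul_apply, smul_eq_mul, PiLp.sub_apply] at h
    linear_combination -h
  have F8b : O 1 - A 1 = t * (A₁ 1 - A 1) := by
    have h := congrArg (fun p : Pt => p 1) hO₁'
    simp only [PiLp.add_apply, PiLp.smul_apply, smul_eq_mul, PiLp.sub_apply] at h
    linear_combination -h
  have F9a : O 0 - A 0 = (B 0 - A 0) + s * ((B₁ 0 - A 0) - (B 0 - A 0)) := by
    have h := congrArg (fun p : Pt => p 0) hO₂'
    simp only [PiLp.add_apply, PiLp.smul_apply, smul_eq_mul, PiLp.sub_apply] at h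
    linear_combination -h
  have F9b : O 1 - A 1 = (B 1 - A 1) + s * ((B₁ 1 - A 1) - (B 1 - A 1)) := by
    have h := congrArg (fun p : Pt => p 1) hO₂'
    simp only [PiLp.add_apply, PiLp.smul_apply, smul_eq_mul, PiLp.sub_apply] at h
    linear_combination -h
  -- the equal length condition
  have F10 : (A₁ 0 - A 0) ^ 2 + (A₁ 1 - A 1) ^ 2
      = ((B₁ 0 - A 0) - (B 0 - A 0)) ^ 2 + ((B₁ 1 - A 1) - (B 1 - A 1)) ^ 2 := by
    have h1 : (A₁ 0 - A 0) ^ 2 + (A₁ 1 - A 1) ^ 2 = dist A A₁ ^ 2 := by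
      rw [dist_sq_coord, dist_comm]
    have h2 : (B₁ 0 - B 0) ^ 2 + (B₁ 1 - B 1) ^ 2 = dist B B₁ ^ 2 := by
      rw [dist_sq_coord, dist_comm]
    rw [h1, hlen, ← h2]
    ring
  -- non-degeneracy
  have hχ := cross_ne_zero hABC
  have hne1 : ¬(A₁ 0 - A 0 = B 0 - A 0 ∧ A₁ 1 - A 1 = B 1 - A 1) := by
    rintro ⟨h1, h2⟩
    exact hA₁B (pt_ext (by linarith) (by linarith))
  have hne2 : ¬(B₁ 0 - A 0 = 0 ∧ B₁ 1 - A 1 = 0) := by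
    rintro ⟨h1, h2⟩
    exact hB₁A (pt_ext (by linarith) (by linarith))
  -- apply the core lemma
  have hmain := aux (B 0 - A 0) (B 1 - A 1) (C 0 - A 0) (C 1 - A 1)
    (Q 0 - A 0) (Q 1 - A 1) (Q' 0 - A 0) (Q' 1 - A 1)
    (A₁ 0 - A 0) (A₁ 1 - A 1) (B₁ 0 - A 0) (B₁ 1 - A 1)
    (O 0 - A 0) (O 1 - A 1) σ u v s t r
    hχ F1 (by linear_combination F2) (by linear_combination F3)
    F4a F4b (by linear_combination F5)
    F6a F6b F7a F7b F8a F8b F9a F9b F10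
    (by linear_combination F11) hne1 hne2
  -- conclude
  have h2 : dist A C ^ 2 = dist B C ^ 2 := by
    rw [← dist_sq_coord A C, ← dist_sq_coord B C]
    linear_combination hmain
  calc dist A C = Real.sqrt (dist A C ^ 2) := (Real.sqrt_sq dist_nonneg).symm
    _ = Real.sqrt (dist B C ^ 2) := by rw [h2]
    _ = dist B C := Real.sqrt_sq dist_nonneg
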